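/- arXiv:2005.04571 — 4 statements merged into one kernel-verified Lean document; each statement's English description precedes it below -/
import Mathlib

section
/- Let D > 0 be the (fixed) total network stake, R > 0 the block reward, α ∈ [0,1] the pool fee, c > 0 the pool cost parameter, C > 0 the self-mining operational cost, and B > 0 the stakeholder's budget. Define the stakeholder's payoff for strategy (p,m) with p, m ≥ 0 and p + m ≤ B as U(p,m) = (m + p(1−α))R/D − (c·exp(−p) if p > 0 else 0) − (C if m > 0 else 0). Then for every feasible strategy (p,m) with (p,m) ∉ {(B,0), (0,B), (0,0)}, one has max(U(B,0), U(0,B)) > U(p,m); i.e., a stakeholder's best response is to invest all of its budget either to the pool or to self-mining. (Theorem 3.) -/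
/-- Theorem 3: with fixed total network stake `D > 0`, block reward `R > 0`,
pool fee `α ∈ [0,1]`, pool cost parameter `c > 0`, self-mining operational cost
`C > 0`, and budget `B > 0`, a stakeholder's payoff for a feasible strategy
`(p, m)` (with `p, m ≥ 0` and `p + m ≤ B`) is
`U p m = (m + p * (1 - α)) * R / D - (if 0 < p then c * exp (-p) else 0)
        - (if 0 < m then C else 0)`.
Then every feasible strategy other than `(B, 0)`, `(0, B)` and `(0, 0)` is strictly
dominated by one of the two full-budget pure strategies:
`max (U B 0) (U 0 B) > U p m`. -/
theorem stake_pool_best_response_all_in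
    (D R α c C B : ℝ) (hD : 0 < D) (hR : 0 < R) (hα0 : 0 ≤ α) (hα1 : α ≤ 1)
    (hc : 0 < c) (hC : 0 < C) (hB : 0 < B)
    (U : ℝ → ℝ → ℝ)
    (hU : ∀ p m, U p m = (m + p * (1 - α)) * R / D -
        (if 0 < p then c * Real.exp (-p) else 0) - (if 0 < m then C else 0)) :
    ∀ p m : ℝ, 0 ≤ p → 0 ≤ m → p + m ≤ B →
      (p, m) ≠ (B, 0) → (p, m) ≠ (0, B) → (p, m) ≠ (0, 0) →
      max (U B 0) (U 0 B) > U p m := by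
  intro p m hp hm hpm hne1 hne2 hne3
  rcases hp.lt_or_eq with hp0 | hp0
  · rcases hm.lt_or_eq with hm0 | hm0
    · -- p > 0, m > 0 : dominated by (0, B)
      refine lt_of_lt_of_le ?_ (le_max_right _ _)
      rw [hU p m, hU 0 B, if_pos hp0, if_pos hm0, if_neg (lt_irrefl (0:ℝ)), if_pos hB]
      have h1 : (m + p * (1 - α)) * R ≤ (B + 0 * (1 - α)) * R := by
        nlinarith [mul_nonneg (mul_nonneg hp hα0) hR.le]
      have key : (m + p * (1 - α)) * R / D ≤ (B + 0 * (1 - α)) * R / D :=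
        (div_le_div_iff_of_pos_right hD).mpr h1
      have he : 0 < c * Real.exp (-p) := mul_pos hc (Real.exp_pos _)
      linarith
    · -- m = 0, 0 < p < B : dominated by (B, 0)
      subst hm0
      have hpB : p < B := lt_of_le_of_ne (by linarith) (fun h => hne1 (by simp [h]))
      refine lt_of_lt_of_le ?_ (le_max_left _ _)
      rw [hU p 0, hU B 0, if_pos hp0, if_pos hB, if_neg (lt_irrefl (0:ℝ))]
      have h1 : (0 + p * (1 - α)) * R ≤ (0 + B * (1 - α)) * R := by
        nlinarith [mul_nonneg (mul_nonneg (sub_nonneg.mpr hpB.le)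
          (by linarith : (0:ℝ) ≤ 1 - α)) hR.le]
      have key : (0 + p * (1 - α)) * R / D ≤ (0 + B * (1 - α)) * R / D :=
        (div_le_div_iff_of_pos_right hD).mpr h1
      have he : c * Real.exp (-B) < c * Real.exp (-p) :=
        (mul_lt_mul_iff_right₀ hc).mpr (Real.exp_lt_exp.mpr (by linarith))
      linarith
  · -- p = 0
    subst hp0
    have hm0 : 0 < m := lt_of_le_of_ne hm (fun h => hne3 (by simp [h.symm]))
    have hmB : m < B := lt_of_le_of_ne (by linarith) (fun h => hne2 (by simp [h]))
    refine lt_of_lt_of_le ?_ (le_max_right _ _)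
    rw [hU 0 m, hU 0 B, if_neg (lt_irrefl (0:ℝ)), if_pos hm0, if_pos hB]
    have key : (m + 0 * (1 - α)) * R / D < (B + 0 * (1 - α)) * R / D :=
      (div_lt_div_iff_of_pos_right hD).mpr (by nlinarith)
    linarith
end

section
/- Let D > 0 be the (fixed) total network stake, R > 0 the block reward, α ∈ [0,1] the pool fee, c > 0 the pool cost parameter, C > 0 the self-mining operational cost, and B > 0 the stakeholder's budget, with payoff U(p,m) = (m + p(1−α))R/D − (c·exp(−p) if p > 0 else 0) − (C if m > 0 else 0) for feasible strategies p, m ≥ 0, p + m ≤ B. Assume C ≠ BαR/D + c·exp(−B) and max(U(B,0), U(0,B)) > 0. Then the stakeholder's utility has a unique maximizer over the feasible set: it is (B,0) if C > BαR/D + c·exp(−B) and (0,B) if C < BαR/D + c·exp(−B). (Theorem 4: given a strategy of the leader, every follower has a unique optimal strategy.) -/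
/-- Theorem 4: with fixed total network stake `D > 0`, block reward `R > 0`,
pool fee `α ∈ [0,1]`, pool cost parameter `c > 0`, self-mining operational cost
`C > 0`, budget `B > 0`, and payoff
`U p m = (m + p * (1 - α)) * R / D - (if 0 < p then c * exp (-p) else 0)
        - (if 0 < m then C else 0)`
over feasible strategies (`p, m ≥ 0`, `p + m ≤ B`), assume
`C ≠ B * α * R / D + c * exp (-B)` and `max (U B 0) (U 0 B) > 0`.
Then the stakeholder's utility has a unique maximizer over the feasible set;
moreover it is `(B, 0)` if `C > B * α * R / D + c * exp (-B)` and `(0, B)` if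
`C < B * α * R / D + c * exp (-B)`. -/
theorem stake_pool_unique_best_response
    (D R α c C B : ℝ) (hD : 0 < D) (hR : 0 < R) (hα0 : 0 ≤ α) (hα1 : α ≤ 1)
    (hc : 0 < c) (hC : 0 < C) (hB : 0 < B)
    (U : ℝ → ℝ → ℝ)
    (hU : ∀ p m, U p m = (m + p * (1 - α)) * R / D -
        (if 0 < p then c * Real.exp (-p) else 0) - (if 0 < m then C else 0))
    (hne : C ≠ B * α * R / D + c * Real.exp (-B))
    (hpos : max (U B 0) (U 0 B) > 0) :
    (∃! q : ℝ × ℝ, (0 ≤ q.1 ∧ 0 ≤ q.2 ∧ q.1 + q.2 ≤ B) ∧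
        ∀ p m : ℝ, 0 ≤ p → 0 ≤ m → p + m ≤ B → U p m ≤ U q.1 q.2) ∧
    (C > B * α * R / D + c * Real.exp (-B) →
      ∀ p m : ℝ, 0 ≤ p → 0 ≤ m → p + m ≤ B → (p, m) ≠ (B, 0) → U p m < U B 0) ∧
    (C < B * α * R / D + c * Real.exp (-B) →
      ∀ p m : ℝ, 0 ≤ p → 0 ≤ m → p + m ≤ B → (p, m) ≠ (0, B) → U p m < U 0 B) := by
  have hr : 0 < R / D := div_pos hR hD
  have hUB0 : U B 0 = B * (1 - α) * (R / D) - c * Real.exp (-B) := by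
    rw [hU, if_pos hB, if_neg (lt_irrefl (0:ℝ))]; ring
  have hU0B : U 0 B = B * (R / D) - C := by
    rw [hU, if_neg (lt_irrefl (0:ℝ)), if_pos hB]; ring
  have hU00 : U 0 0 = 0 := by
    rw [hU, if_neg (lt_irrefl (0:ℝ)), if_neg (lt_irrefl (0:ℝ))]; ring
  have hdiff : U B 0 - U 0 B = C - (B * α * R / D + c * Real.exp (-B)) := by
    rw [hUB0, hU0B]; ring
  -- Case 1: C > threshold, (B,0) strictly dominates
  have key1 : B * α * R / D + c * Real.exp (-B) < C →
      ∀ p m : ℝ, 0 ≤ p → 0 ≤ m → p + m ≤ B → (p, m) ≠ (B, 0) → U p m < U B 0 := by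
    intro h p m hp hm hpm hne'
    have hBgt : U 0 B < U B 0 := by linarith
    have h0 : 0 < U B 0 := by
      rcases lt_max_iff.mp hpos with h' | h'
      · exact h'
      · linarith
    rcases eq_or_lt_of_le hm with hm0 | hm0
    · -- m = 0
      have hmz : m = 0 := hm0.symm
      subst hmz
      have hpB : p ≠ B := fun hpB => hne' (by rw [hpB])
      have hpB' : p < B := lt_of_le_of_ne (by linarith) hpB
      rcases eq_or_lt_of_le hp with hp0 | hp0
      · subst hp0
        rw [hU00]
        exact h0
      · rw [hU p 0, if_pos hp0, if_neg (lt_irrefl (0:ℝ)), hUB0]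
        have he : Real.exp (-B) < Real.exp (-p) := Real.exp_lt_exp.mpr (by linarith)
        have h1 : p * (1 - α) * (R / D) ≤ B * (1 - α) * (R / D) := by
          have : p * (1 - α) ≤ B * (1 - α) :=
            mul_le_mul_of_nonneg_right hpB'.le (by linarith)
          exact mul_le_mul_of_nonneg_right this hr.le
        have h2 : c * Real.exp (-B) < c * Real.exp (-p) :=
          mul_lt_mul_of_pos_left he hc
        have : (0 + p * (1 - α)) * R / D = p * (1 - α) * (R / D) := by ring
        rw [this]
        linarith
    · -- m > 0
      rw [hU p m, if_pos hm0]
      have hsum : m + p * (1 - α) ≤ B := by nlinarith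
      have h1 : (m + p * (1 - α)) * R / D ≤ B * (R / D) := by
        have := mul_le_mul_of_nonneg_right hsum hr.le
        calc (m + p * (1 - α)) * R / D = (m + p * (1 - α)) * (R / D) := by ring
        _ ≤ B * (R / D) := this
      have h2 : (0:ℝ) ≤ if 0 < p then c * Real.exp (-p) else 0 := by
        split_ifs
        · positivity
        · exact le_refl 0
      have h3 : B * (R / D) - C < U B 0 := by rw [← hU0B]; exact hBgt
      linarith
  -- Case 2: C < threshold, (0,B) strictly dominates
  have key2 : C < B * α * R / D + c * Real.exp (-B) →
      ∀ p m : ℝ, 0 ≤ p → 0 ≤ m → p + m ≤ B → (p, m) ≠ (0, B) → U p m < U 0 B := by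
    intro h p m hp hm hpm hne'
    have hBgt : U B 0 < U 0 B := by linarith
    have h0 : 0 < U 0 B := by
      rcases lt_max_iff.mp hpos with h' | h'
      · linarith
      · exact h'
    rcases eq_or_lt_of_le hp with hp0 | hp0
    · -- p = 0
      have hpz : p = 0 := hp0.symm
      subst hpz
      have hmB : m ≠ B := fun hmB => hne' (by rw [hmB])
      rcases eq_or_lt_of_le hm with hm0 | hm0
      · have hmz : m = 0 := hm0.symm
        subst hmz
        rw [hU00]; exact h0
      · have hmB' : m < B := lt_of_le_of_ne (by linarith) hmB
        rw [hU 0 m, if_neg (lt_irrefl (0:ℝ)), if_pos hm0, hU0B]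
        have h1 : m * (R / D) < B * (R / D) := mul_lt_mul_of_pos_right hmB' hr
        have : (m + 0 * (1 - α)) * R / D = m * (R / D) := by ring
        rw [this]
        linarith
    · -- p > 0
      rcases eq_or_lt_of_le hm with hm0 | hm0
      · -- m = 0 : U p 0 ≤ U B 0 < U 0 B
        have hmz : m = 0 := hm0.symm
        subst hmz
        rw [hU p 0, if_pos hp0, if_neg (lt_irrefl (0:ℝ))]
        have he : Real.exp (-B) ≤ Real.exp (-p) := Real.exp_le_exp.mpr (by linarith)
        have h1 : p * (1 - α) * (R / D) ≤ B * (1 - α) * (R / D) := by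
          have : p * (1 - α) ≤ B * (1 - α) :=
            mul_le_mul_of_nonneg_right (by linarith) (by linarith)
          exact mul_le_mul_of_nonneg_right this hr.le
        have h2 : c * Real.exp (-B) ≤ c * Real.exp (-p) :=
          mul_le_mul_of_nonneg_left he hc.le
        have : (0 + p * (1 - α)) * R / D = p * (1 - α) * (R / D) := by ring
        rw [this]
        have h3 : B * (1 - α) * (R / D) - c * Real.exp (-B) < U 0 B := by
          rw [← hUB0]; exact hBgt
        linarith
      · -- m > 0
        rw [hU p m, if_pos hp0, if_pos hm0, hU0B]
        have hsum : m + p * (1 - α) ≤ B := by nlinarith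
        have h1 : (m + p * (1 - α)) * R / D ≤ B * (R / D) := by
          have := mul_le_mul_of_nonneg_right hsum hr.le
          calc (m + p * (1 - α)) * R / D = (m + p * (1 - α)) * (R / D) := by ring
          _ ≤ B * (R / D) := this
        have h2 : 0 < c * Real.exp (-p) := by positivity
        linarith
  refine ⟨?_, fun h => key1 h, fun h => key2 h⟩
  rcases lt_or_gt_of_ne hne with h | h
  · -- C < threshold : unique maximizer (0, B)
    refine ⟨(0, B), ⟨⟨le_rfl, hB.le, by simp⟩, ?_⟩, ?_⟩
    · intro p m hp hm hpm
      by_cases h' : (p, m) = (0, B)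
      · obtain ⟨h1, h2⟩ := Prod.mk.injEq .. ▸ h'
        simp only [Prod.mk.injEq] at h'
        rw [h'.1, h'.2]
      · exact (key2 h p m hp hm hpm h').le
    · rintro ⟨q1, q2⟩ ⟨⟨hq1, hq2, hq3⟩, hqmax⟩
      by_contra hq
      have hlt := key2 h q1 q2 hq1 hq2 hq3 hq
      have := hqmax 0 B le_rfl hB.le (by simp)
      simp only at this
      linarith
  · -- C > threshold : unique maximizer (B, 0)
    refine ⟨(B, 0), ⟨⟨hB.le, le_rfl, by simp⟩, ?_⟩, ?_⟩
    · intro p m hp hm hpm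
      by_cases h' : (p, m) = (B, 0)
      · simp only [Prod.mk.injEq] at h'
        rw [h'.1, h'.2]
      · exact (key1 h p m hp hm hpm h').le
    · rintro ⟨q1, q2⟩ ⟨⟨hq1, hq2, hq3⟩, hqmax⟩
      by_contra hq
      have hlt := key1 h q1 q2 hq1 hq2 hq3 hq
      have := hqmax B 0 hB.le le_rfl (by simp)
      simp only at this
      linarith
end

section
/- Let D > 0 be the (fixed) total network stake, R > 0 the block reward, α ∈ [0,1] the pool fee, c > 0 the pool cost parameter, C > 0 the self-mining operational cost, and B > 0 the stakeholder's budget, with payoff U(p,m) = (m + p(1−α))R/D − (c·exp(−p) if p > 0 else 0) − (C if m > 0 else 0) for feasible strategies p, m ≥ 0, p + m ≤ B. If both full-budget payoffs are negative, i.e., U(B,0) < 0 and U(0,B) < 0, then abstaining is strictly optimal: U(0,0) = 0 > U(p,m) for every feasible (p,m) ≠ (0,0). (Case 4: a stakeholder with negative rewards in both cases does not participate in the consensus process.) -/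
/-- Case 4: with fixed total network stake `D > 0`, block reward `R > 0`,
pool fee `α ∈ [0,1]`, pool cost parameter `c > 0`, self-mining operational cost
`C > 0`, budget `B > 0`, and payoff
`U p m = (m + p * (1 - α)) * R / D - (if 0 < p then c * exp (-p) else 0)
        - (if 0 < m then C else 0)`
over feasible strategies (`p, m ≥ 0`, `p + m ≤ B`): if both full-budget payoffs are
negative, `U B 0 < 0` and `U 0 B < 0`, then abstaining is strictly optimal:
`U 0 0 = 0` and `0 > U p m` for every feasible `(p, m) ≠ (0, 0)`. -/
theorem stake_pool_nonparticipation_optimal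
    (D R α c C B : ℝ) (hD : 0 < D) (hR : 0 < R) (hα0 : 0 ≤ α) (hα1 : α ≤ 1)
    (hc : 0 < c) (hC : 0 < C) (hB : 0 < B)
    (U : ℝ → ℝ → ℝ)
    (hU : ∀ p m, U p m = (m + p * (1 - α)) * R / D -
        (if 0 < p then c * Real.exp (-p) else 0) - (if 0 < m then C else 0))
    (hpool : U B 0 < 0) (hmine : U 0 B < 0) :
    U 0 0 = 0 ∧
      ∀ p m : ℝ, 0 ≤ p → 0 ≤ m → p + m ≤ B → (p, m) ≠ (0, 0) → 0 > U p m := by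
  rw [hU] at hpool hmine
  norm_num [if_pos hB] at hpool hmine
  -- hpool : (0 + B * (1 - α)) * R / D - c * Real.exp (-B) - 0 < 0
  -- hmine : (B + 0) * R / D - 0 - C < 0
  constructor
  · rw [hU]; simp
  · intro p m hp hm hsum hne
    rw [hU]
    have hpB : p ≤ B := by linarith
    have hmB : m ≤ B := by linarith
    have hmine' : B * R / D < C := by linarith [hmine]
    have hpool' : B * (1 - α) * R / D < c * Real.exp (-B) := by linarith [hpool]
    have hmono : ∀ x y : ℝ, 0 ≤ x → x ≤ B → 0 ≤ y → y ≤ 1 →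
        x * y * R / D ≤ B * y * R / D := by
      intro x y hx hxB hy _
      apply div_le_div_of_nonneg_right _ hD.le
      have : x * y ≤ B * y := mul_le_mul_of_nonneg_right hxB hy
      exact mul_le_mul_of_nonneg_right this hR.le
    have hα' : 0 ≤ 1 - α := by linarith
    rcases lt_or_eq_of_le hp with hp' | hp'
    · rcases lt_or_eq_of_le hm with hm' | hm'
      · -- both positive
        rw [if_pos hp', if_pos hm']
        have h1 : p * (1 - α) * R / D ≤ B * (1 - α) * R / D :=
          hmono p (1-α) hp hpB hα' (by linarith)
        have h2 : m * 1 * R / D ≤ B * 1 * R / D := hmono m 1 hm hmB zero_le_one le_rfl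
        have h3 : Real.exp (-B) ≤ Real.exp (-p) := Real.exp_le_exp.mpr (by linarith)
        have h4 : (m + p * (1 - α)) * R / D = m * 1 * R / D + p * (1 - α) * R / D := by
          ring
        have h5 : B * 1 * R / D = B * R / D := by ring
        nlinarith [h1, h2, h3, h4]
      · -- m = 0, p > 0
        rw [if_pos hp', if_neg (by rw [← hm']; exact lt_irrefl 0), ← hm']
        have h1 : p * (1 - α) * R / D ≤ B * (1 - α) * R / D :=
          hmono p (1-α) hp hpB hα' (by linarith)
        have h3 : Real.exp (-B) ≤ Real.exp (-p) := Real.exp_le_exp.mpr (by linarith)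
        have h4 : (0 + p * (1 - α)) * R / D = p * (1 - α) * R / D := by ring
        nlinarith [h1, h3]
    · -- p = 0
      rcases lt_or_eq_of_le hm with hm' | hm'
      · rw [if_neg (by rw [← hp']; exact lt_irrefl 0), if_pos hm', ← hp']
        have h2 : m * 1 * R / D ≤ B * 1 * R / D := hmono m 1 hm hmB zero_le_one le_rfl
        have h4 : (m + 0 * (1 - α)) * R / D = m * 1 * R / D := by ring
        have h5 : B * 1 * R / D = B * R / D := by ring
        linarith
      · exact absurd (by rw [← hp', ← hm']) hne
end

section
/- Consider the leader's Mixed-Integer Programming problem: given N ≥ 1 followers with budgets B_i > 0 and operational costs C_i > 0, block reward R > 0, total stake T > 0, and constant L ≥ 0, maximize Σ_{i=1}^N x_i·(B_i R α / T + c·exp(−B_i)) over α ≥ 0, c ≥ 0, and x_i ∈ {0,1}, subject to B_i R α / T + c·exp(−B_i) ≤ L(1 − x_i) + C_i for all i. Then this problem attains its maximum: there exists a feasible (α*, c*, x*) whose objective value is at least that of every feasible point. (Theorem 5: there exists at least one Stackelberg equilibrium, i.e., at least one optimal leader strategy.) -/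
open Finset

/-- Theorem 5 (existence of an optimal leader strategy): the leader's
Mixed-Integer Program — maximize `∑ i, x i * (B i * R * α / T + c * exp (-B i))`
over `α ≥ 0`, `c ≥ 0` and binary `x i ∈ {0, 1}`, subject to
`B i * R * α / T + c * exp (-B i) ≤ L * (1 - x i) + C i` for all `i` —
attains its maximum: there is a feasible point whose objective value is at least
the objective value of every feasible point. -/
theorem stake_pool_leader_MIP_attains_maximum
    (N : ℕ) (hN : 1 ≤ N) (B C : Fin N → ℝ)
    (hB : ∀ i, 0 < B i) (hC : ∀ i, 0 < C i)
    (R T L : ℝ) (hR : 0 < R) (hT : 0 < T) (hL : 0 ≤ L) :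
    ∃ α c : ℝ, ∃ x : Fin N → ℝ,
      (0 ≤ α ∧ 0 ≤ c ∧ (∀ i, x i = 0 ∨ x i = 1) ∧
        (∀ i, B i * R * α / T + c * Real.exp (-B i) ≤ L * (1 - x i) + C i)) ∧
      ∀ α' c' : ℝ, ∀ x' : Fin N → ℝ,
        (0 ≤ α' ∧ 0 ≤ c' ∧ (∀ i, x' i = 0 ∨ x' i = 1) ∧
          (∀ i, B i * R * α' / T + c' * Real.exp (-B i) ≤ L * (1 - x' i) + C i)) →
        ∑ i, x' i * (B i * R * α' / T + c' * Real.exp (-B i)) ≤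
          ∑ i, x i * (B i * R * α / T + c * Real.exp (-B i)) := by
  classical
  set A : ℝ := ∑ j, C j * T / (B j * R) with hAdef
  set Cm : ℝ := ∑ j, C j * Real.exp (B j) with hCmdef
  have hA0 : 0 ≤ A := Finset.sum_nonneg fun j _ =>
    div_nonneg (mul_nonneg (hC j).le hT.le) (mul_nonneg (hB j).le hR.le)
  have hCm0 : 0 ≤ Cm := Finset.sum_nonneg fun j _ =>
    mul_nonneg (hC j).le (Real.exp_pos _).le
  set f : ℝ × ℝ × (Fin N → ℝ) → ℝ :=
    fun p => ∑ i, p.2.2 i * (B i * R * p.1 / T + p.2.1 * Real.exp (-B i)) with hfdef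
  set K : Set (ℝ × ℝ × (Fin N → ℝ)) :=
    {p | p.1 ∈ Set.Icc 0 A ∧ p.2.1 ∈ Set.Icc 0 Cm ∧
      (∀ i, p.2.2 i = 0 ∨ p.2.2 i = 1) ∧
      ∀ i, B i * R * p.1 / T + p.2.1 * Real.exp (-B i) ≤ L * (1 - p.2.2 i) + C i}
    with hKdef
  -- continuity helpers
  have hc1 : Continuous fun p : ℝ × ℝ × (Fin N → ℝ) => p.1 := continuous_fst
  have hc2 : Continuous fun p : ℝ × ℝ × (Fin N → ℝ) => p.2.1 :=
    continuous_snd.fst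
  have hc3 : ∀ i, Continuous fun p : ℝ × ℝ × (Fin N → ℝ) => p.2.2 i :=
    fun i => (continuous_apply i).comp continuous_snd.snd
  have hfc : Continuous f := by
    apply continuous_finset_sum
    intro i _
    exact (hc3 i).mul (((continuous_const.mul hc1).div_const T).add
      ((hc2).mul continuous_const))
  -- K is compact
  have hKclosed : IsClosed K := by
    have h1 : IsClosed {p : ℝ × ℝ × (Fin N → ℝ) | p.1 ∈ Set.Icc 0 A} :=
      isClosed_Icc.preimage hc1
    have h2 : IsClosed {p : ℝ × ℝ × (Fin N → ℝ) | p.2.1 ∈ Set.Icc 0 Cm} :=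
      isClosed_Icc.preimage hc2
    have h3 : IsClosed {p : ℝ × ℝ × (Fin N → ℝ) | ∀ i, p.2.2 i = 0 ∨ p.2.2 i = 1} := by
      have : {p : ℝ × ℝ × (Fin N → ℝ) | ∀ i, p.2.2 i = 0 ∨ p.2.2 i = 1} =
          ⋂ i, (fun p : ℝ × ℝ × (Fin N → ℝ) => p.2.2 i) ⁻¹' ({0, 1} : Set ℝ) := by
        ext p; simp [Set.mem_iInter]
      rw [this]
      exact isClosed_iInter fun i =>
        ((isClosed_singleton.union isClosed_singleton).preimage (hc3 i)).mono (by rfl)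
    have h4 : IsClosed {p : ℝ × ℝ × (Fin N → ℝ) |
        ∀ i, B i * R * p.1 / T + p.2.1 * Real.exp (-B i) ≤ L * (1 - p.2.2 i) + C i} := by
      have : {p : ℝ × ℝ × (Fin N → ℝ) |
          ∀ i, B i * R * p.1 / T + p.2.1 * Real.exp (-B i) ≤ L * (1 - p.2.2 i) + C i} =
          ⋂ i, {p : ℝ × ℝ × (Fin N → ℝ) |
            B i * R * p.1 / T + p.2.1 * Real.exp (-B i) ≤ L * (1 - p.2.2 i) + C i} := by
        ext p; simp [Set.mem_iInter]
      rw [this]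
      refine isClosed_iInter fun i => isClosed_le ?_ ?_
      · exact ((continuous_const.mul hc1).div_const T).add (hc2.mul continuous_const)
      · exact (continuous_const.mul (continuous_const.sub (hc3 i))).add continuous_const
    exact h1.inter (h2.inter (h3.inter h4))
  have hKcompact : IsCompact K := by
    have hbig : IsCompact ((Set.Icc (0:ℝ) A) ×ˢ (Set.Icc (0:ℝ) Cm) ×ˢ
        (Set.univ.pi fun _ : Fin N => ({0, 1} : Set ℝ))) :=
      isCompact_Icc.prod (isCompact_Icc.prod (isCompact_univ_pi fun _ =>
        (Set.toFinite ({0,1} : Set ℝ)).isCompact))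
    refine hbig.of_isClosed_subset hKclosed ?_
    intro p hp
    refine Set.mem_prod.mpr ⟨hp.1, Set.mem_prod.mpr ⟨hp.2.1, ?_⟩⟩
    intro i _
    rcases hp.2.2.1 i with h | h <;> simp [h]
  -- zero point
  have hz : ((0 : ℝ), (0 : ℝ), (fun _ => 0 : Fin N → ℝ)) ∈ K := by
    refine ⟨⟨le_refl _, hA0⟩, ⟨le_refl _, hCm0⟩, fun i => Or.inl rfl, fun i => ?_⟩
    have h1 : B i * R * (0:ℝ) / T + (0:ℝ) * Real.exp (-B i) = 0 := by ring
    rw [h1]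
    show (0:ℝ) ≤ L * (1 - (0:ℝ)) + C i
    nlinarith [hC i, hL]
  have hfz : f (0, 0, fun _ => 0) = 0 := by
    simp [hfdef]
  -- maximum on K
  obtain ⟨p, hpK, hpmax⟩ := hKcompact.exists_isMaxOn ⟨_, hz⟩ hfc.continuousOn
  refine ⟨p.1, p.2.1, p.2.2, ⟨hpK.1.1, hpK.2.1.1, hpK.2.2.1, hpK.2.2.2⟩, ?_⟩
  intro α' c' x' ⟨hα', hc', hx', hcon⟩
  have hfp : ∑ i, x' i * (B i * R * α' / T + c' * Real.exp (-B i)) = f (α', c', x') := rfl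
  have hgoal : f (α', c', x') ≤ f p → _ := id
  show f (α', c', x') ≤ f p
  by_cases hall : ∀ i, x' i = 0
  · have : f (α', c', x') = 0 := by
      simp only [hfdef]
      exact Finset.sum_eq_zero fun i _ => by rw [hall i]; ring
    rw [this, ← hfz]
    exact hpmax hz
  · push_neg at hall
    obtain ⟨i₀, hi₀⟩ := hall
    have hx1 : x' i₀ = 1 := (hx' i₀).resolve_left hi₀
    have hcon0 : B i₀ * R * α' / T + c' * Real.exp (-B i₀) ≤ C i₀ := by
      have := hcon i₀
      rw [hx1] at this
      linarith
    have hexp : 0 < Real.exp (-B i₀) := Real.exp_pos _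
    have hce : 0 ≤ c' * Real.exp (-B i₀) := mul_nonneg hc' hexp.le
    have hαbound : α' ≤ C i₀ * T / (B i₀ * R) := by
      have h1 : B i₀ * R * α' / T ≤ C i₀ := by linarith
      have h2 : B i₀ * R * α' ≤ C i₀ * T := by
        have := (div_le_iff₀ hT).mp h1
        linarith
      rw [le_div_iff₀ (mul_pos (hB i₀) hR)]
      nlinarith
    have hαA : α' ≤ A := by
      have h : C i₀ * T / (B i₀ * R) ≤ A :=
        Finset.single_le_sum (f := fun j => C j * T / (B j * R))
          (fun j _ => div_nonneg (mul_nonneg (hC j).le hT.le)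
            (mul_nonneg (hB j).le hR.le)) (Finset.mem_univ i₀)
      linarith
    have hcbound : c' ≤ C i₀ * Real.exp (B i₀) := by
      have h1 : c' * Real.exp (-B i₀) ≤ C i₀ := by
        have h0 : 0 ≤ B i₀ * R * α' / T :=
          div_nonneg (mul_nonneg (mul_nonneg (hB i₀).le hR.le) hα') hT.le
        linarith
      have h2 : c' * Real.exp (-B i₀) * Real.exp (B i₀) ≤ C i₀ * Real.exp (B i₀) :=
        mul_le_mul_of_nonneg_right h1 (Real.exp_pos _).le
      calc c' = c' * (Real.exp (-B i₀) * Real.exp (B i₀)) := by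
              rw [← Real.exp_add]; simp
        _ = c' * Real.exp (-B i₀) * Real.exp (B i₀) := by ring
        _ ≤ C i₀ * Real.exp (B i₀) := h2
    have hcCm : c' ≤ Cm := by
      have h : C i₀ * Real.exp (B i₀) ≤ Cm :=
        Finset.single_le_sum (f := fun j => C j * Real.exp (B j))
          (fun j _ => mul_nonneg (hC j).le (Real.exp_pos _).le) (Finset.mem_univ i₀)
      linarith
    have hmem : ((α', c', x') : ℝ × ℝ × (Fin N → ℝ)) ∈ K :=
      ⟨⟨hα', hαA⟩, ⟨hc', hcCm⟩, hx', hcon⟩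
    exact hpmax hmem
end
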